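/- Let P, Q be distinct non-orthocomplementary rank-one projections on ℂ² (i.e., Q ≠ P and Q ≠ I - P) and let s, t ∈ (0,1). Then the operator I - tP - sQ is positive semidefinite if and only if s ≤ (1-t)/(1 - t·‖P - Q‖²). -/

import Mathlib

noncomputable section
open scoped InnerProductSpace ComplexConjugate

/-- An effect on a complex Hilbert space: a positive operator below the identity. -/
def IsEffect {H : Type*} [NormedAddCommGroup H] [InnerProductSpace ℂ H] [CompleteSpace H]
    (A : H →L[ℂ] H) : Prop :=
  A.IsPositive ∧ ((1 : H →L[ℂ] H) - A).IsPositive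

/-- Effects `A`, `B` are coexistent: there are effects `M ≤ A`, `N ≤ I - A` with `M + N = B`. -/
def Coexistent {H : Type*} [NormedAddCommGroup H] [InnerProductSpace ℂ H] [CompleteSpace H]
    (A B : H →L[ℂ] H) : Prop :=
  ∃ M N : H →L[ℂ] H, IsEffect M ∧ IsEffect N ∧
    (A - M).IsPositive ∧ (((1 : H →L[ℂ] H) - A) - N).IsPositive ∧ M + N = B

/-- A rank-one orthogonal projection. -/
def IsRankOneProjection {H : Type*} [NormedAddCommGroup H] [InnerProductSpace ℂ H]
    [CompleteSpace H] (P : H →L[ℂ] H) : Prop :=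
  IsSelfAdjoint P ∧ P ∘L P = P ∧ Module.finrank ℂ (LinearMap.range (P : H →ₗ[ℂ] H)) = 1

/-- The strength function `Λ(B,P) = sup {λ ≥ 0 : λP ≤ B}`. -/
def strength {H : Type*} [NormedAddCommGroup H] [InnerProductSpace ℂ H] [CompleteSpace H]
    (B P : H →L[ℂ] H) : ℝ :=
  sSup {l : ℝ | 0 ≤ l ∧ (B - (l : ℂ) • P).IsPositive}

abbrev E2 := EuclideanSpace ℂ (Fin 2)

lemma rankone_repr {H : Type*} [NormedAddCommGroup H] [InnerProductSpace ℂ H]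
    [CompleteSpace H] {P : H →L[ℂ] H} (h : IsRankOneProjection P) :
    ∃ p : H, ‖p‖ = 1 ∧ ∀ x, P x = ⟪p, x⟫_ℂ • p := by
  obtain ⟨hsa, hidem, hrk⟩ := h
  rw [finrank_eq_one_iff'] at hrk
  obtain ⟨v, hv0, hv⟩ := hrk
  set p₀ : H := (v : H) with hp₀
  have hp₀0 : p₀ ≠ 0 := fun h => hv0 (Subtype.ext h)
  have hp₀n : (0:ℝ) < ‖p₀‖ := norm_pos_iff.mpr hp₀0
  set p : H := (‖p₀‖⁻¹ : ℂ) • p₀ with hp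
  have hpn : ‖p‖ = 1 := by
    rw [hp, norm_smul]
    simp [norm_inv, hp₀n.ne']
  -- P fixes p₀
  have hPp₀ : P p₀ = p₀ := by
    obtain ⟨y, hy⟩ := v.2
    have hy' : P y = p₀ := hy
    have hiy : P (P y) = P y := by
      have := congrFun (congrArg (fun (T : H →L[ℂ] H) => (T : H → H)) hidem) y
      simpa using this
    rw [← hy', hiy]
  have hPp : P p = p := by rw [hp, map_smul, hPp₀]
  have hrange : ∀ x, ∃ c : ℂ, P x = c • p := by
    intro x
    have hmem : P x ∈ LinearMap.range (P : H →ₗ[ℂ] H) := ⟨x, rfl⟩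
    obtain ⟨c, hc⟩ := hv ⟨P x, hmem⟩
    refine ⟨c * ‖p₀‖, ?_⟩
    have : c • p₀ = P x := congrArg Subtype.val hc
    rw [hp, smul_smul, mul_assoc]
    rw [show ((‖p₀‖ : ℂ) * (‖p₀‖⁻¹ : ℂ)) = 1 by
      rw [mul_inv_cancel₀]; exact_mod_cast hp₀n.ne']
    simpa using this.symm
  have hpp : ⟪p, p⟫_ℂ = 1 := by
    rw [inner_self_eq_norm_sq_to_K, hpn]; norm_num
  refine ⟨p, hpn, fun x => ?_⟩
  obtain ⟨c, hc⟩ := hrange x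
  have hsym := hsa.isSymmetric
  have h1 : ⟪p, P x⟫_ℂ = c := by rw [hc, inner_smul_right, hpp, mul_one]
  have h2 : ⟪p, P x⟫_ℂ = ⟪p, x⟫_ℂ := by
    have := hsym p x
    simp only [ContinuousLinearMap.coe_coe] at this
    rw [← this, hPp]
  rw [hc, ← h1, h2]

lemma pair_expansion {u v : E2} (hu : ‖u‖ = 1) (hv : ‖v‖ = 1) (huv : ⟪u, v⟫_ℂ = 0)
    (x : E2) : x = ⟪u, x⟫_ℂ • u + ⟪v, x⟫_ℂ • v := by
  have huu : ⟪u, u⟫_ℂ = 1 := by rw [inner_self_eq_norm_sq_to_K, hu]; norm_num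
  have hvv : ⟪v, v⟫_ℂ = 1 := by rw [inner_self_eq_norm_sq_to_K, hv]; norm_num
  have hvu : ⟪v, u⟫_ℂ = 0 := by rw [← inner_conj_symm, huv, map_zero]
  set f : Fin 2 → E2 := ![u, v] with hf
  have horth : Orthonormal ℂ f := by
    rw [orthonormal_iff_ite]
    intro i j
    fin_cases i <;> fin_cases j <;> simp [hf, huu, hvv, huv, hvu, hu, hv]
  have hspan : Submodule.span ℂ (Set.range f) = ⊤ := by
    apply horth.linearIndependent.span_eq_top_of_card_eq_finrank
    simp [finrank_euclideanSpace]
  set y : E2 := x - ⟪u, x⟫_ℂ • u - ⟪v, x⟫_ℂ • v with hy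
  have h1 : ⟪u, y⟫_ℂ = 0 := by
    simp [hy, inner_sub_right, inner_smul_right, huu, huv, hu]
  have h2 : ⟪v, y⟫_ℂ = 0 := by
    simp [hy, inner_sub_right, inner_smul_right, hvv, hvu, hv]
  have hymem : y ∈ Submodule.span ℂ (Set.range f) := by rw [hspan]; trivial
  rw [Submodule.mem_span_range_iff_exists_fun] at hymem
  obtain ⟨c, hc⟩ := hymem
  have hy0 : y = 0 := by
    have hyy : ⟪y, y⟫_ℂ = 0 := by
      nth_rewrite 1 [← hc]
      rw [Fin.sum_univ_two, inner_add_left, inner_smul_left, inner_smul_left,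
        show f 0 = u from rfl, show f 1 = v from rfl, h1, h2]
      ring
    exact inner_self_eq_zero.mp hyy
  have : x - ⟪u, x⟫_ℂ • u - ⟪v, x⟫_ℂ • v = 0 := hy0
  linear_combination (norm := abel) this

lemma sq_eq_of_nonneg {x y : ℝ} (hx : 0 ≤ x) (hy : 0 ≤ y) (h : x ^ 2 = y ^ 2) : x = y := by
  rw [← Real.sqrt_sq hx, h, Real.sqrt_sq hy]

lemma norm_sq_coords {p e : E2} (hp : ‖p‖ = 1) (he : ‖e‖ = 1) (hpe : ⟪p, e⟫_ℂ = 0)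
    (α β : ℂ) : ‖α • p + β • e‖ ^ 2 = Complex.normSq α + Complex.normSq β := by
  have hpp : ⟪p, p⟫_ℂ = 1 := by rw [inner_self_eq_norm_sq_to_K, hp]; norm_num
  have hee : ⟪e, e⟫_ℂ = 1 := by rw [inner_self_eq_norm_sq_to_K, he]; norm_num
  have hep : ⟪e, p⟫_ℂ = 0 := by rw [← inner_conj_symm, hpe, map_zero]
  have key : ⟪α • p + β • e, α • p + β • e⟫_ℂ
      = ((Complex.normSq α + Complex.normSq β : ℝ) : ℂ) := by
    rw [inner_add_left, inner_add_right, inner_add_right, inner_smul_left, inner_smul_left,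
      inner_smul_left, inner_smul_left, inner_smul_right, inner_smul_right, inner_smul_right,
      inner_smul_right, hpp, hee, hpe, hep]
    push_cast
    rw [← Complex.mul_conj, ← Complex.mul_conj]
    ring
  rw [@norm_sq_eq_re_inner ℂ, key]
  simp

lemma keyC (γ u v : ℂ) (a c : ℝ) (h1 : γ * (starRingEnd ℂ) γ = (a : ℂ))
    (h2 : (a : ℂ) + (c : ℂ) ^ 2 = 1) :
    (u - ((starRingEnd ℂ) γ * u + (c : ℂ) * v) * γ) *
        (starRingEnd ℂ) (u - ((starRingEnd ℂ) γ * u + (c : ℂ) * v) * γ) +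
      (((starRingEnd ℂ) γ * u + (c : ℂ) * v) *
        (starRingEnd ℂ) ((starRingEnd ℂ) γ * u + (c : ℂ) * v)) * (c : ℂ) ^ 2 =
    (c : ℂ) ^ 2 * (u * (starRingEnd ℂ) u + v * (starRingEnd ℂ) v) := by
  simp only [map_sub, map_add, map_mul, Complex.conj_conj, Complex.conj_ofReal]
  linear_combination ((γ * (starRingEnd ℂ) γ - 1) * (u * (starRingEnd ℂ) u)
      + (c : ℂ) * (starRingEnd ℂ) γ * u * (starRingEnd ℂ) v
      + (c : ℂ) * γ * (starRingEnd ℂ) u * v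
      + (c : ℂ) ^ 2 * v * (starRingEnd ℂ) v) * h1
    + ((γ * (starRingEnd ℂ) γ - 1) * (u * (starRingEnd ℂ) u)
      + (c : ℂ) * (starRingEnd ℂ) γ * u * (starRingEnd ℂ) v
      + (c : ℂ) * γ * (starRingEnd ℂ) u * v
      + (c : ℂ) ^ 2 * v * (starRingEnd ℂ) v) * h2

lemma den_pos' {t x : ℝ} (ht0 : 0 < t) (ht1 : t < 1) (hx0 : 0 ≤ x) (hx1 : x ≤ 1) :
    0 < 1 - t * x := by nlinarith

lemma forward_det' {s t a c : ℝ} (hs0 : 0 < s) (hs1 : s < 1) (ht0 : 0 < t) (ht1 : t < 1)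
    (ha : 0 < a) (hac : a + c ^ 2 = 1) (h1sc2 : 0 < 1 - s * c ^ 2)
    (hx : t * (a * ((1 - s * c ^ 2) * (1 - s * c ^ 2))) + s * (a * a)
      ≤ a * ((1 - s * c ^ 2) * (1 - s * c ^ 2)) + (s * a * c) * (s * a * c)) :
    s * (1 - t * c ^ 2) ≤ 1 - t := by
  have hKa : 0 < a * (1 - s * c ^ 2) := mul_pos ha h1sc2
  have h2 : a * (1 - s * c ^ 2) * 0 ≤ a * (1 - s * c ^ 2) *
      ((1 - t) * (1 - s * c ^ 2) - s * a) := by nlinarith [hx]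
  have step2 : 0 ≤ (1 - t) * (1 - s * c ^ 2) - s * a :=
    le_of_mul_le_mul_left h2 hKa
  have ha' : a = 1 - c ^ 2 := by linarith
  rw [ha'] at step2
  nlinarith [step2]

lemma backward_ineq' {s t a c b X Y W2 : ℝ} (hs0 : 0 < s) (hs1 : s < 1) (ht0 : 0 < t)
    (ht1 : t < 1) (hb : b ^ 2 = a) (hac : a + c ^ 2 = 1) (hc0 : 0 ≤ c) (hX : 0 ≤ X)
    (hY : 0 ≤ Y) (hb0 : 0 ≤ b) (h1sc2 : 0 < 1 - s * c ^ 2)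
    (hdet : s * (1 - t * c ^ 2) ≤ 1 - t) (hW : W2 ≤ (b * X + c * Y) ^ 2) :
    t * X ^ 2 + s * W2 ≤ X ^ 2 + Y ^ 2 := by
  have hbc : b ^ 2 + c ^ 2 = 1 := by rw [hb]; exact hac
  have hdetnn : (0:ℝ) ≤ 1 - t - s + s * t * c ^ 2 := by nlinarith
  have key : (1 - s * c ^ 2) * (X ^ 2 + Y ^ 2 - t * X ^ 2 - s * (b * X + c * Y) ^ 2)
      = (1 - t - s + s * t * c ^ 2) * X ^ 2 + ((1 - s * c ^ 2) * Y - s * b * c * X) ^ 2 := by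
    linear_combination (-s * X ^ 2) * hbc
  have h5 : (1 - s * c ^ 2) * 0 ≤ (1 - s * c ^ 2) *
      (X ^ 2 + Y ^ 2 - t * X ^ 2 - s * (b * X + c * Y) ^ 2) := by
    rw [mul_zero, key]
    positivity
  have h6 : 0 ≤ X ^ 2 + Y ^ 2 - t * X ^ 2 - s * (b * X + c * Y) ^ 2 :=
    le_of_mul_le_mul_left h5 h1sc2
  nlinarith [mul_le_mul_of_nonneg_left hW hs0.le]

theorem coexistence_criterion_rank_one (P Q : E2 →L[ℂ] E2)
    (hP : IsRankOneProjection P) (hQ : IsRankOneProjection Q)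
    (hQP : Q ≠ P) (hQP' : Q ≠ (1 : E2 →L[ℂ] E2) - P)
    (s t : ℝ) (hs : s ∈ Set.Ioo (0 : ℝ) 1) (ht : t ∈ Set.Ioo (0 : ℝ) 1) :
    ((1 : E2 →L[ℂ] E2) - (t : ℂ) • P - (s : ℂ) • Q).IsPositive ↔
      s ≤ (1 - t) / (1 - t * ‖P - Q‖ ^ 2) := by
  obtain ⟨hs0, hs1⟩ := hs
  obtain ⟨ht0, ht1⟩ := ht
  obtain ⟨p, hp1, hPp⟩ := rankone_repr hP
  obtain ⟨q, hq1, hQq⟩ := rankone_repr hQ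
  have hpp : ⟪p, p⟫_ℂ = 1 := by rw [inner_self_eq_norm_sq_to_K, hp1]; norm_num
  have hqq : ⟪q, q⟫_ℂ = 1 := by rw [inner_self_eq_norm_sq_to_K, hq1]; norm_num
  set γ : ℂ := ⟪p, q⟫_ℂ with hγ
  have hqp : ⟪q, p⟫_ℂ = (starRingEnd ℂ) γ := (inner_conj_symm q p).symm
  set a : ℝ := Complex.normSq γ with ha
  have hγγ : γ * (starRingEnd ℂ) γ = (a : ℂ) := Complex.mul_conj γ
  have ha0 : 0 ≤ a := Complex.normSq_nonneg γ
  set q' : E2 := q - γ • p with hq'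
  have hpq' : ⟪p, q'⟫_ℂ = 0 := by
    rw [hq', inner_sub_right, inner_smul_right, hpp, mul_one, sub_self]
  set c : ℝ := ‖q'‖ with hc
  have hc0 : 0 ≤ c := norm_nonneg _
  have hc2 : c ^ 2 = 1 - a := by
    have key : ⟪q', q'⟫_ℂ = ((1 - a : ℝ) : ℂ) := by
      rw [hq', inner_sub_left, inner_sub_right, inner_sub_right, inner_smul_left,
        inner_smul_right, inner_smul_left, inner_smul_right, hpp, hqq, hqp, ← hγ]
      push_cast
      linear_combination -hγγ
    rw [hc, @norm_sq_eq_re_inner ℂ, key]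
    simp
  -- c ≠ 0
  have hcne : c ≠ 0 := by
    intro h0
    have hq'0 : q - γ • p = 0 := by rw [← hq']; exact norm_eq_zero.mp (by rw [← hc]; exact h0)
    have hqγp : q = γ • p := sub_eq_zero.mp hq'0
    have ha1 : (a : ℂ) = 1 := by
      have h2 : a = 1 := by have := hc2; rw [h0] at this; linarith [this]
      exact_mod_cast congrArg Complex.ofReal h2
    apply hQP
    refine ContinuousLinearMap.ext fun x => ?_
    rw [hQq, hPp, hqγp, inner_smul_left, smul_smul,
      show (starRingEnd ℂ) γ * ⟪p, x⟫_ℂ * γ = ⟪p, x⟫_ℂ by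
        linear_combination ⟪p, x⟫_ℂ * (hγγ.trans ha1)]
  have hcpos : (0:ℝ) < c := lt_of_le_of_ne hc0 (Ne.symm hcne)
  set e : E2 := ((c:ℂ)⁻¹) • q' with he
  have hcC : ((c:ℂ)) ≠ 0 := by exact_mod_cast hcne
  have he1 : ‖e‖ = 1 := by
    rw [he, norm_smul]
    simp [norm_inv, hcne]
    rw [abs_of_nonneg hc0]
    field_simp
    exact hc.symm
  have hpe : ⟪p, e⟫_ℂ = 0 := by rw [he, inner_smul_right, hpq', mul_zero]
  have hqpe : q = γ • p + (c:ℂ) • e := by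
    rw [he, smul_smul, mul_inv_cancel₀ hcC, one_smul, hq']
    abel
  -- a > 0
  have hapos : (0:ℝ) < a := by
    rcases lt_or_eq_of_le ha0 with h | h
    · exact h
    · exfalso
      have hγ0 : γ = 0 := by
        have := Complex.normSq_eq_zero.mp (ha ▸ h.symm)
        exact this
      apply hQP'
      refine ContinuousLinearMap.ext fun x => ?_
      have hγ0' : ⟪p, q⟫_ℂ = 0 := by rw [← hγ]; exact hγ0
      have hexp := pair_expansion hp1 hq1 hγ0' x
      rw [hQq, ContinuousLinearMap.sub_apply, ContinuousLinearMap.one_apply, hPp,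
        eq_sub_iff_add_eq, add_comm]
      exact hexp.symm
  have hac : a + c ^ 2 = 1 := by rw [hc2]; ring
  -- coordinates
  have hw : ∀ x : E2, ⟪q, x⟫_ℂ = (starRingEnd ℂ) γ * ⟪p, x⟫_ℂ + (c:ℂ) * ⟪e, x⟫_ℂ := by
    intro x
    conv_lhs => rw [hqpe]
    rw [inner_add_left, inner_smul_left, inner_smul_left, Complex.conj_ofReal]
  have hxnorm : ∀ x : E2, ‖x‖ ^ 2 = Complex.normSq ⟪p, x⟫_ℂ + Complex.normSq ⟪e, x⟫_ℂ := by
    intro x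
    conv_lhs => rw [pair_expansion hp1 he1 hpe x]
    exact norm_sq_coords hp1 he1 hpe _ _
  -- norm of P - Q
  have hacC : (a : ℂ) + (c : ℂ) ^ 2 = 1 := by exact_mod_cast congrArg Complex.ofReal hac
  have hnormsq : ∀ x : E2, ‖(P - Q) x‖ ^ 2 = c ^ 2 * ‖x‖ ^ 2 := by
    intro x
    have happ : (P - Q) x = (⟪p, x⟫_ℂ - ⟪q, x⟫_ℂ * γ) • p + (-(⟪q, x⟫_ℂ * (c:ℂ))) • e := by
      rw [ContinuousLinearMap.sub_apply, hPp, hQq]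
      have : ⟪q, x⟫_ℂ • q = ⟪q, x⟫_ℂ • (γ • p + (c:ℂ) • e) := by rw [← hqpe]
      rw [this, smul_add, smul_smul, smul_smul]
      module
    rw [happ, norm_sq_coords hp1 he1 hpe, hxnorm x, hw x]
    rw [Complex.normSq_neg]
    rw [← Complex.ofReal_inj]
    push_cast
    rw [← Complex.mul_conj, ← Complex.mul_conj, ← Complex.mul_conj, ← Complex.mul_conj]
    simp only [map_sub, map_add, map_mul, Complex.conj_conj, Complex.conj_ofReal]
    set u := ⟪p, x⟫_ℂ
    set v := ⟪e, x⟫_ℂ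
    linear_combination ((γ * (starRingEnd ℂ) γ - 1) * (u * (starRingEnd ℂ) u)
        + (c : ℂ) * (starRingEnd ℂ) γ * u * (starRingEnd ℂ) v
        + (c : ℂ) * γ * (starRingEnd ℂ) u * v
        + (c : ℂ) ^ 2 * v * (starRingEnd ℂ) v) * hγγ
      + ((γ * (starRingEnd ℂ) γ - 1) * (u * (starRingEnd ℂ) u)
        + (c : ℂ) * (starRingEnd ℂ) γ * u * (starRingEnd ℂ) v
        + (c : ℂ) * γ * (starRingEnd ℂ) u * v
        + (c : ℂ) ^ 2 * v * (starRingEnd ℂ) v) * hacC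
  have hPQx : ∀ x : E2, ‖(P - Q) x‖ = c * ‖x‖ := by
    intro x
    refine sq_eq_of_nonneg (norm_nonneg _) (mul_nonneg hc0 (norm_nonneg _)) ?_
    rw [hnormsq x]; ring
  have hnorm : ‖P - Q‖ = c := by
    refine le_antisymm ((P - Q).opNorm_le_bound hc0 fun x => le_of_eq (hPQx x)) ?_
    have h := (P - Q).le_opNorm p
    rw [hPQx p, hp1, mul_one, mul_one] at h
    exact h
  rw [hnorm]
  -- positivity criterion
  set A : E2 →L[ℂ] E2 := (1 : E2 →L[ℂ] E2) - (t : ℂ) • P - (s : ℂ) • Q with hA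
  have hsaA : IsSelfAdjoint A := by
    have hstar : ∀ r : ℝ, star ((r : ℝ) : ℂ) = ((r : ℝ) : ℂ) := fun r => by
      rw [Complex.star_def, Complex.conj_ofReal]
    have h1 : IsSelfAdjoint ((t : ℂ) • P) := IsSelfAdjoint.smul (hstar t) hP.1
    have h2 : IsSelfAdjoint ((s : ℂ) • Q) := IsSelfAdjoint.smul (hstar s) hQ.1
    have h0 : IsSelfAdjoint (1 : E2 →L[ℂ] E2) := by exact .one _
    show IsSelfAdjoint ((1 : E2 →L[ℂ] E2) - (t : ℂ) • P - (s : ℂ) • Q)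
    exact IsSelfAdjoint.sub (R := E2 →L[ℂ] E2)
      (IsSelfAdjoint.sub (R := E2 →L[ℂ] E2) h0 h1) h2
  have hre : ∀ x : E2, A.reApplyInnerSelf x
      = ‖x‖ ^ 2 - t * Complex.normSq ⟪p, x⟫_ℂ - s * Complex.normSq ⟪q, x⟫_ℂ := by
    intro x
    rw [ContinuousLinearMap.reApplyInnerSelf_apply]
    rw [hA, ContinuousLinearMap.sub_apply, ContinuousLinearMap.sub_apply,
      ContinuousLinearMap.one_apply, ContinuousLinearMap.smul_apply,
      ContinuousLinearMap.smul_apply, hPp, hQq]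
    rw [inner_sub_left, inner_sub_left, inner_smul_left, inner_smul_left,
      inner_smul_left, inner_smul_left]
    rw [Complex.conj_ofReal, Complex.conj_ofReal]
    have e1 : (starRingEnd ℂ) ⟪p, x⟫_ℂ * ⟪p, x⟫_ℂ = (Complex.normSq ⟪p, x⟫_ℂ : ℂ) :=
      Complex.normSq_eq_conj_mul_self.symm
    have e2 : (starRingEnd ℂ) ⟪q, x⟫_ℂ * ⟪q, x⟫_ℂ = (Complex.normSq ⟪q, x⟫_ℂ : ℂ) :=
      Complex.normSq_eq_conj_mul_self.symm
    rw [e1, e2, ← Complex.ofReal_mul, ← Complex.ofReal_mul, map_sub, map_sub,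
      ← @norm_sq_eq_re_inner ℂ]
    simp only [RCLike.re_to_complex, Complex.ofReal_re]
  have hcrit : A.IsPositive ↔ ∀ x : E2,
      t * Complex.normSq ⟪p, x⟫_ℂ + s * Complex.normSq ⟪q, x⟫_ℂ ≤ ‖x‖ ^ 2 := by
    constructor
    · intro h x
      have := h.2 x
      rw [hre x] at this
      linarith
    · intro h
      refine ⟨hsaA.isSymmetric, fun x => ?_⟩
      rw [hre x]
      linarith [h x]
  clear_value A e c q' a γ
  have hc2le : c ^ 2 ≤ 1 := by rw [hc2]; linarith
  have hden : (0:ℝ) < 1 - t * c ^ 2 := den_pos' ht0 ht1 (sq_nonneg c) hc2le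
  have h1sc2 : (0:ℝ) < 1 - s * c ^ 2 := den_pos' hs0 hs1 (sq_nonneg c) hc2le
  rw [hcrit, le_div_iff₀ hden]
  constructor
  · intro h
    set x₀ : E2 := (γ * ((1 - s * c ^ 2 : ℝ) : ℂ)) • p + ((s * a * c : ℝ) : ℂ) • e with hx₀
    have hu₀ : ⟪p, x₀⟫_ℂ = γ * ((1 - s * c ^ 2 : ℝ) : ℂ) := by
      rw [hx₀, inner_add_right, inner_smul_right, inner_smul_right, hpp, hpe]
      ring
    have hep : ⟪e, p⟫_ℂ = 0 := by rw [← inner_conj_symm, hpe, map_zero]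
    have hee : ⟪e, e⟫_ℂ = 1 := by rw [inner_self_eq_norm_sq_to_K, he1]; norm_num
    have hv₀ : ⟪e, x₀⟫_ℂ = ((s * a * c : ℝ) : ℂ) := by
      rw [hx₀, inner_add_right, inner_smul_right, inner_smul_right, hee, hep]
      ring
    have hw₀ : ⟪q, x₀⟫_ℂ = (a : ℂ) := by
      rw [hw x₀, hu₀, hv₀]
      push_cast
      linear_combination ((1:ℂ) - (s:ℂ) * (c:ℂ) ^ 2) * hγγ
    have hx := h x₀
    rw [hxnorm x₀, hu₀, hv₀, hw₀] at hx
    simp only [Complex.normSq_mul, Complex.normSq_ofReal, ← ha] at hx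
    exact forward_det' hs0 hs1 ht0 ht1 hapos hac h1sc2 hx
  · intro hdet x
    have hnw : Complex.normSq ⟪q, x⟫_ℂ
        ≤ (‖γ‖ * ‖⟪p, x⟫_ℂ‖ + c * ‖⟪e, x⟫_ℂ‖) ^ 2 := by
      rw [← Complex.sq_norm]
      have habs : ‖⟪q, x⟫_ℂ‖
          ≤ ‖γ‖ * ‖⟪p, x⟫_ℂ‖ + c * ‖⟪e, x⟫_ℂ‖ := by
        rw [hw x]
        refine le_trans (norm_add_le _ _) ?_
        rw [norm_mul, norm_mul, Complex.norm_conj, Complex.norm_real, Real.norm_eq_abs, abs_of_nonneg hc0]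
      exact pow_le_pow_left₀ (norm_nonneg _) habs 2
    have hb : ‖γ‖ ^ 2 = a := by rw [ha]; exact Complex.sq_norm γ
    rw [hxnorm x, ← Complex.sq_norm ⟪p, x⟫_ℂ, ← Complex.sq_norm ⟪e, x⟫_ℂ]
    set X := ‖⟪p, x⟫_ℂ‖ with hX
    set Y := ‖⟪e, x⟫_ℂ‖ with hY
    set b := ‖γ‖ with hb'
    have hX0 : 0 ≤ X := norm_nonneg _
    have hY0 : 0 ≤ Y := norm_nonneg _
    have hb0 : 0 ≤ b := norm_nonneg _
    exact backward_ineq' hs0 hs1 ht0 ht1 hb hac hc0 hX0 hY0 hb0 h1sc2 hdet hnw
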